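/- Let X and Y be real Banach spaces with Y separable, and let T : X → Y be a bounded linear operator. Then T is an Asplund operator if and only if T*(Y*) is separable. (That is, the class of non-Asplund operators with separable codomain coincides with the class of operators with separable codomain whose adjoint has non-separable range.) -/

import Mathlib

open TopologicalSpace

/-- Pull back separability along a map that is isometric on a set. -/
lemma isSeparable_of_isometric_image {α β : Type*} [PseudoMetricSpace α] [PseudoMetricSpace β]
    (φ : α → β) (S : Set α) (hiso : ∀ a ∈ S, ∀ b ∈ S, dist (φ a) (φ b) = dist a b)
    (h : IsSeparable (φ '' S)) : IsSeparable S := by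
  obtain ⟨t, hts, htc, hst⟩ := h.exists_countable_dense_subset
  have : Countable ↥t := htc.to_subtype
  set g : ↥t → α := fun y => (hts y.2).choose with hg
  have hgS : ∀ y : ↥t, g y ∈ S := fun y => (hts y.2).choose_spec.1
  have hgφ : ∀ y : ↥t, φ (g y) = ↑y := fun y => (hts y.2).choose_spec.2
  refine ⟨Set.range g, Set.countable_range g, fun a ha => Metric.mem_closure_iff.2 fun ε hε => ?_⟩
  obtain ⟨y, hyt, hy⟩ := Metric.mem_closure_iff.1 (hst ⟨a, ha, rfl⟩) ε hε
  refine ⟨g ⟨y, hyt⟩, Set.mem_range_self _, ?_⟩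
  have := hiso a ha (g ⟨y, hyt⟩) (hgS ⟨y, hyt⟩)
  rw [hgφ ⟨y, hyt⟩] at this
  rwa [← this]

/-- `T` is an Asplund operator if for every separable closed subspace `Z` of its domain,
the adjoint of the restriction `T ∘ ι_Z` has separable range in `Z*`. -/
def IsAsplundOperator {X Y : Type*} [NormedAddCommGroup X] [NormedSpace ℝ X]
    [NormedAddCommGroup Y] [NormedSpace ℝ Y] (T : X →L[ℝ] Y) : Prop :=
  ∀ Z : Submodule ℝ X, IsClosed (Z : Set X) → SeparableSpace ↥Z →
    TopologicalSpace.IsSeparable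
      (Set.range fun g : StrongDual ℝ Y => g.comp (T.comp Z.subtypeL))

set_option maxHeartbeats 2000000 in
theorem stmt7 (X Y : Type*) [NormedAddCommGroup X] [NormedSpace ℝ X] [CompleteSpace X]
    [NormedAddCommGroup Y] [NormedSpace ℝ Y] [CompleteSpace Y] [SeparableSpace Y]
    (T : X →L[ℝ] Y) :
    IsAsplundOperator T ↔
      TopologicalSpace.IsSeparable
        (Set.range fun g : StrongDual ℝ Y => g.comp T) := by
  constructor
  · -- forward direction
    intro h
    classical
    obtain ⟨s, hsc, hsd⟩ := TopologicalSpace.exists_countable_dense Y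
    have : Countable ↥s := hsc.to_subtype
    set P : ↥s × ℕ → X → Prop :=
      fun p x => ‖x‖ ≤ 1 ∧ ‖T x - ↑p.1‖ < 1 / (p.2 + 1) with hP
    set xc : ↥s × ℕ → X := fun p => if hp : ∃ x, P p x then hp.choose else 0 with hxc
    set Z := (Submodule.span ℝ (Set.range xc)).topologicalClosure with hZ
    have hZc : IsClosed (Z : Set X) := Submodule.isClosed_topologicalClosure _
    have hZsep : SeparableSpace ↥Z := by
      have h1 : IsSeparable (Set.range xc) := (Set.countable_range xc).isSeparable
      have h2 : IsSeparable ((Submodule.span ℝ (Set.range xc) : Submodule ℝ X) : Set X) := h1.span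
      have h3 : IsSeparable (Z : Set X) := by
        rw [hZ, Submodule.topologicalClosure_coe]
        exact h2.closure
      exact h3.separableSpace
    have hS' := h Z hZc hZsep
    set r : StrongDual ℝ X →L[ℝ] (↥Z →L[ℝ] ℝ) :=
      (ContinuousLinearMap.compL ℝ ↥Z X ℝ).flip Z.subtypeL with hr
    have hrapp : ∀ f : StrongDual ℝ X, r f = f.comp Z.subtypeL := fun f => rfl
    -- the key isometry property
    have key : ∀ g : StrongDual ℝ Y, ‖r (g.comp T)‖ = ‖g.comp T‖ := by
      intro g
      refine le_antisymm ?_ ?_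
      · rw [hrapp]
        refine le_trans (ContinuousLinearMap.opNorm_comp_le _ _) ?_
        exact mul_le_of_le_one_right (norm_nonneg _) (Submodule.norm_subtypeL_le Z)
      · refine le_of_forall_pos_le_add fun ε hε => ?_
        refine ContinuousLinearMap.opNorm_le_bound _ (by positivity) fun x => ?_
        rcases eq_or_ne x 0 with rfl | hx
        · simp
        · have hxn : 0 < ‖x‖ := norm_pos_iff.2 hx
          set x₁ := ‖x‖⁻¹ • x with hx₁def
          have hx₁ : ‖x₁‖ = 1 := norm_smul_inv_norm hx
          have hxx : x = ‖x‖ • x₁ := by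
            rw [hx₁def, smul_smul, mul_inv_cancel₀ hxn.ne', one_smul]
          suffices key1 : ‖(g.comp T) x₁‖ ≤ ‖r (g.comp T)‖ + ε by
            calc ‖(g.comp T) x‖ = ‖x‖ * ‖(g.comp T) x₁‖ := by
                  conv_lhs => rw [hxx]
                  rw [map_smul, norm_smul, Real.norm_eq_abs, abs_of_pos hxn]
              _ ≤ ‖x‖ * (‖r (g.comp T)‖ + ε) := by
                  exact mul_le_mul_of_nonneg_left key1 hxn.le
              _ = (‖r (g.comp T)‖ + ε) * ‖x‖ := mul_comm _ _
          set δ := ε / (2 * ‖g‖ + 1) with hδ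
          have hδpos : 0 < δ := by positivity
          obtain ⟨n, hn⟩ := exists_nat_one_div_lt hδpos
          obtain ⟨d, hds, hdd⟩ := Metric.mem_closure_iff.1 (hsd (T x₁)) (1 / (n + 1))
            (by positivity)
          have hex : ∃ x', P (⟨d, hds⟩, n) x' :=
            ⟨x₁, hx₁.le, by rw [← dist_eq_norm]; exact hdd⟩
          set x' := xc (⟨d, hds⟩, n) with hx'def
          have hx' : P (⟨d, hds⟩, n) x' := by
            rw [hx'def, hxc]; simp only [dif_pos hex]; exact hex.choose_spec
          have hx'Z : x' ∈ Z :=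
            Submodule.le_topologicalClosure _ (Submodule.subset_span (Set.mem_range_self _))
          have h1 : ‖g (T x')‖ ≤ ‖r (g.comp T)‖ := by
            have he : g (T x') = (r (g.comp T)) ⟨x', hx'Z⟩ := rfl
            rw [he]
            refine le_trans ((r (g.comp T)).le_opNorm _) ?_
            exact mul_le_of_le_one_right (norm_nonneg _) hx'.1
          have h2 : ‖T x₁ - T x'‖ ≤ 2 / (n + 1) := by
            have e1 : ‖T x₁ - d‖ < 1 / (n + 1) := by rw [← dist_eq_norm]; exact hdd
            have e2 : ‖d - T x'‖ < 1 / (n + 1) := by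
              rw [norm_sub_rev]; exact hx'.2
            calc ‖T x₁ - T x'‖ = ‖(T x₁ - d) + (d - T x')‖ := by abel_nf
              _ ≤ ‖T x₁ - d‖ + ‖d - T x'‖ := norm_add_le _ _
              _ ≤ 1 / (n + 1) + 1 / (n + 1) := by linarith
              _ = 2 / (n + 1) := by ring
          have h3 : ‖g (T x₁) - g (T x')‖ ≤ ε := by
            calc ‖g (T x₁) - g (T x')‖ = ‖g (T x₁ - T x')‖ := by rw [map_sub]
              _ ≤ ‖g‖ * ‖T x₁ - T x'‖ := g.le_opNorm _
              _ ≤ ‖g‖ * (2 / (n + 1)) := by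
                  exact mul_le_mul_of_nonneg_left h2 (norm_nonneg g)
              _ = 2 * ‖g‖ * (1 / (n + 1)) := by ring
              _ ≤ 2 * ‖g‖ * δ := by
                  exact mul_le_mul_of_nonneg_left hn.le (by positivity)
              _ ≤ (2 * ‖g‖ + 1) * δ := by nlinarith
              _ = ε := by
                  rw [hδ]; field_simp
          have h4 : ‖g (T x₁)‖ ≤ ‖g (T x')‖ + ‖g (T x₁) - g (T x')‖ := by
            have := norm_add_le (g (T x')) (g (T x₁) - g (T x'))
            simpa using this
          calc ‖(g.comp T) x₁‖ = ‖g (T x₁)‖ := by rw [ContinuousLinearMap.comp_apply]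
            _ ≤ ‖g (T x')‖ + ‖g (T x₁) - g (T x')‖ := h4
            _ ≤ ‖r (g.comp T)‖ + ε := add_le_add h1 h3
    -- conclude via the isometry pullback
    refine isSeparable_of_isometric_image r _ ?_ ?_
    · rintro a ⟨g, rfl⟩ b ⟨g', rfl⟩
      dsimp only
      rw [show dist (r (g.comp T)) (r (g'.comp T)) = ‖r (g.comp T) - r (g'.comp T)‖ by
        exact dist_eq_norm (r (g.comp T)) (r (g'.comp T)), dist_eq_norm, ← map_sub,
        show g.comp T - g'.comp T = (g - g').comp T from
          (ContinuousLinearMap.sub_comp g g' T).symm, key]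
    · have himg : r '' (Set.range fun g : StrongDual ℝ Y => g.comp T) =
          Set.range fun g : StrongDual ℝ Y => g.comp (T.comp Z.subtypeL) := by
        ext f
        constructor
        · rintro ⟨-, ⟨g, rfl⟩, rfl⟩
          exact ⟨g, (ContinuousLinearMap.comp_assoc _ _ _).symm⟩
        · rintro ⟨g, rfl⟩
          exact ⟨g.comp T, ⟨g, rfl⟩, ContinuousLinearMap.comp_assoc _ _ _⟩
      rw [himg]
      exact hS'
  · -- reverse direction
    intro hS Z hZc hZsep
    set r : StrongDual ℝ X →L[ℝ] (↥Z →L[ℝ] ℝ) :=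
      (ContinuousLinearMap.compL ℝ ↥Z X ℝ).flip Z.subtypeL with hr
    have himg : (Set.range fun g : StrongDual ℝ Y => g.comp (T.comp Z.subtypeL)) =
        r '' (Set.range fun g : StrongDual ℝ Y => g.comp T) := by
      ext f
      constructor
      · rintro ⟨g, rfl⟩
        exact ⟨g.comp T, ⟨g, rfl⟩, ContinuousLinearMap.comp_assoc _ _ _⟩
      · rintro ⟨-, ⟨g, rfl⟩, rfl⟩
        exact ⟨g, (ContinuousLinearMap.comp_assoc _ _ _).symm⟩
    rw [himg]
    exact hS.image r.continuous
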